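/- Let x, y be complex numbers. Then p₁′(x,y) = 0 and p₂′(x,y) = 0 hold simultaneously if and only if (x,y) is one of the four points (0,0), (−3/2,0), (0,−3/2), (3/2,3/2), or x + y ∈ {−1/2, 1/2, 1, 2}. -/
import Mathlib


/-- The polynomial p₁′ from the singular-vector relations at level 1/2. -/
noncomputable def p₁' (x y : ℂ) : ℂ :=
  -(81/32) * x + (135/64) * x^2 + (729/64) * x^3 - (297/32) * x^4 - (81/16) * x^5
    + (27/8) * x^6 + (81/32) * y - (135/64) * y^2 - (729/64) * y^3 + (297/32) * y^4
    + (81/16) * y^5 - (27/8) * y^6 - (729/64) * x * y^2 + (297/16) * x * y^3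
    + (243/16) * x * y^4 - (27/2) * x * y^5 + (729/64) * x^2 * y + (81/8) * x^2 * y^3
    - (135/8) * x^2 * y^4 - (297/16) * x^3 * y - (81/8) * x^3 * y^2
    - (243/16) * x^4 * y + (135/8) * x^4 * y^2 + (27/2) * x^5 * y

/-- The polynomial p₂′ from the singular-vector relations at level 1/2. -/
noncomputable def p₂' (x y : ℂ) : ℂ :=
  (81/32) * x - (135/64) * x^2 - (729/64) * x^3 + (297/32) * x^4 + (81/16) * x^5
    - (27/8) * x^6 - (459/64) * x * y - (243/64) * x * y^2 + 27 * x * y^3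
    - (405/16) * x * y^4 + (27/4) * x * y^5 - (243/16) * x^2 * y
    + (2025/32) * x^2 * y^2 - (567/8) * x^2 * y^3 + (189/8) * x^2 * y^4
    + (729/16) * x^3 * y - (243/4) * x^3 * y^2 + 27 * x^3 * y^3
    - (81/8) * x^4 * y + (27/4) * x^4 * y^2 - (27/4) * x^5 * y

/-- The common zeros of p₁′ and p₂′ are the four points (0,0), (−3/2,0), (0,−3/2),
(3/2,3/2) together with the four lines x + y ∈ {−1/2, 1/2, 1, 2}. -/
theorem stmt_9 (x y : ℂ) :
    (p₁' x y = 0 ∧ p₂' x y = 0) ↔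
      ((x, y) = (0, 0) ∨ (x, y) = (-(3/2 : ℂ), 0) ∨ (x, y) = (0, -(3/2 : ℂ)) ∨
        (x, y) = ((3/2 : ℂ), (3/2 : ℂ)) ∨
        x + y ∈ ({-(1/2 : ℂ), (1/2 : ℂ), 1, 2} : Set ℂ)) := by
  have e1 : p₁' x y = (27/16) * ((x - y) * ((2*x + 2*y + 3) *
      ((x + y + 1/2) * ((x + y - 1/2) * ((x + y - 1) * (x + y - 2)))))) := by
    unfold p₁'; ring
  have e2 : p₂' x y = (27/16) * (x * ((4*y - 2*x - 3) *
      ((x + y + 1/2) * ((x + y - 1/2) * ((x + y - 1) * (x + y - 2)))))) := by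
    unfold p₂'; ring
  rw [e1, e2]
  simp only [Prod.mk.injEq, mul_eq_zero, Set.mem_insert_iff, Set.mem_singleton_iff]
  constructor
  · rintro ⟨h1, h2⟩
    rcases h1 with h|hA|hA|h|h|h|h
    · norm_num at h
    · -- x = y
      rcases h2 with h|hB|hB|h|h|h|h
      · norm_num at h
      · exact Or.inl ⟨hB, by linear_combination hB - hA⟩
      · exact Or.inr (Or.inr (Or.inr (Or.inl ⟨by linear_combination 2*hA + hB/2,
          by linear_combination hA + hB/2⟩)))
      · exact Or.inr (Or.inr (Or.inr (Or.inr (Or.inl (by linear_combination h)))))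
      · exact Or.inr (Or.inr (Or.inr (Or.inr (Or.inr (Or.inl (by linear_combination h))))))
      · exact Or.inr (Or.inr (Or.inr (Or.inr (Or.inr (Or.inr (Or.inl (by linear_combination h)))))))
      · exact Or.inr (Or.inr (Or.inr (Or.inr (Or.inr (Or.inr (Or.inr (by linear_combination h)))))))
    · -- 2x + 2y + 3 = 0
      rcases h2 with h|hB|hB|h|h|h|h
      · norm_num at h
      · exact Or.inr (Or.inr (Or.inl ⟨hB, by linear_combination (hA - 2*hB)/2⟩))
      · exact Or.inr (Or.inl ⟨by linear_combination hA/3 - hB/6, by linear_combination hA/6 + hB/6⟩)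
      · exact Or.inr (Or.inr (Or.inr (Or.inr (Or.inl (by linear_combination h)))))
      · exact Or.inr (Or.inr (Or.inr (Or.inr (Or.inr (Or.inl (by linear_combination h))))))
      · exact Or.inr (Or.inr (Or.inr (Or.inr (Or.inr (Or.inr (Or.inl (by linear_combination h)))))))
      · exact Or.inr (Or.inr (Or.inr (Or.inr (Or.inr (Or.inr (Or.inr (by linear_combination h)))))))
    · exact Or.inr (Or.inr (Or.inr (Or.inr (Or.inl (by linear_combination h)))))
    · exact Or.inr (Or.inr (Or.inr (Or.inr (Or.inr (Or.inl (by linear_combination h))))))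
    · exact Or.inr (Or.inr (Or.inr (Or.inr (Or.inr (Or.inr (Or.inl (by linear_combination h)))))))
    · exact Or.inr (Or.inr (Or.inr (Or.inr (Or.inr (Or.inr (Or.inr (by linear_combination h)))))))
  · rintro (⟨hx, hy⟩|⟨hx, hy⟩|⟨hx, hy⟩|⟨hx, hy⟩|h|h|h|h)
    · subst hx; subst hy; norm_num
    · subst hx; subst hy; norm_num
    · subst hx; subst hy; norm_num
    · subst hx; subst hy; norm_num
    · exact ⟨Or.inr (Or.inr (Or.inr (Or.inl (by linear_combination h)))),
        Or.inr (Or.inr (Or.inr (Or.inl (by linear_combination h))))⟩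
    · exact ⟨Or.inr (Or.inr (Or.inr (Or.inr (Or.inl (by linear_combination h))))),
        Or.inr (Or.inr (Or.inr (Or.inr (Or.inl (by linear_combination h)))))⟩
    · exact ⟨Or.inr (Or.inr (Or.inr (Or.inr (Or.inr (Or.inl (by linear_combination h)))))),
        Or.inr (Or.inr (Or.inr (Or.inr (Or.inr (Or.inl (by linear_combination h))))))⟩
    · exact ⟨Or.inr (Or.inr (Or.inr (Or.inr (Or.inr (Or.inr (by linear_combination h)))))),
        Or.inr (Or.inr (Or.inr (Or.inr (Or.inr (Or.inr (by linear_combination h))))))⟩
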